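/- Let {(p^k, x^k)}_{k=1}^K be an individual dataset and x̄ ∈ ℝ^m_+ an arbitrary bundle. Augment the direct revealed preference relations by declaring x̄ ⪰^R x^k for every k, x^k ⪰^R x̄ whenever p^k·(x̄ − x^k) ≤ 0, and x^k ≻^R x̄ whenever p^k·(x̄ − x^k) < 0, and let ⪰^I, ≻^I be the corresponding indirect (transitive-closure) relations. Then there exists an increasing, explicitly quasiconcave utility u rationalizing the dataset with u(x̄) ≥ max{u(x^k) : 1 ≤ k ≤ K} if and only if, for the augmented relations: (1) GARP is satisfied, and (2) there is no bundle y ≤ x̄ that strictly dominates x̄. -/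

import Mathlib

open Finset

/-- The dot product of two vectors in `ℝ^m`. -/
def dot {m : ℕ} (p x : Fin m → ℝ) : ℝ := ∑ j, p j * x j

/-- `x ≪ y`: strictly smaller in every component. -/
def StrLt {m : ℕ} (x y : Fin m → ℝ) : Prop := ∀ j, x j < y j

/-- An increasing utility on the nonnegative orthant. -/
def Incr {m : ℕ} (u : (Fin m → ℝ) → ℝ) : Prop :=
  (∀ x y : Fin m → ℝ, 0 ≤ x → x ≤ y → u x ≤ u y) ∧
  (∀ x y : Fin m → ℝ, 0 ≤ x → StrLt x y → u x < u y)

/-- `u` rationalizes the individual dataset `{(p k, x k)}` : `u` is increasing and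
any bundle strictly better than `x k` is more expensive at prices `p k`. -/
def Rationalizes {m K : ℕ} (p x : Fin K → Fin m → ℝ) (u : (Fin m → ℝ) → ℝ) : Prop :=
  Incr u ∧ ∀ k, ∀ z : Fin m → ℝ, 0 ≤ z → u (x k) < u z → dot (p k) (x k) < dot (p k) z

/-- Direct revealed preference. -/
def RP {m K : ℕ} (p x : Fin K → Fin m → ℝ) (a b : Fin m → ℝ) : Prop :=
  0 ≤ a ∧ 0 ≤ b ∧ (a = b ∨ ∃ k, x k ≤ a ∧ dot (p k) b ≤ dot (p k) (x k))

/-- Direct strict revealed preference. -/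
def SRP {m K : ℕ} (p x : Fin K → Fin m → ℝ) (a b : Fin m → ℝ) : Prop :=
  0 ≤ a ∧ 0 ≤ b ∧
    ((∃ a', StrLt a' a ∧ RP p x a' b) ∨ ∃ k, x k ≤ a ∧ dot (p k) b < dot (p k) (x k))

/-- Indirect revealed preference: the transitive closure of `RP`. -/
def IRP {m K : ℕ} (p x : Fin K → Fin m → ℝ) : (Fin m → ℝ) → (Fin m → ℝ) → Prop :=
  Relation.TransGen (RP p x)

/-- Indirect strict revealed preference: a finite `RP`-chain with at least one strict link. -/
def SIRP {m K : ℕ} (p x : Fin K → Fin m → ℝ) (a b : Fin m → ℝ) : Prop :=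
  ∃ c d, Relation.ReflTransGen (RP p x) a c ∧ SRP p x c d ∧ Relation.ReflTransGen (RP p x) d b

/-- Quasiconcavity on the nonnegative orthant. -/
def QuasiconcaveOn' {m : ℕ} (u : (Fin m → ℝ) → ℝ) : Prop :=
  ∀ x y : Fin m → ℝ, 0 ≤ x → 0 ≤ y → ∀ t : ℝ, 0 < t → t < 1 →
    min (u x) (u y) ≤ u (t • x + (1 - t) • y)

/-- Explicit quasiconcavity on the nonnegative orthant. -/
def ExplQuasiconcaveOn' {m : ℕ} (u : (Fin m → ℝ) → ℝ) : Prop :=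
  QuasiconcaveOn' u ∧
  ∀ x y : Fin m → ℝ, 0 ≤ x → 0 ≤ y → u x ≠ u y → ∀ t : ℝ, 0 < t → t < 1 →
    min (u x) (u y) < u (t • x + (1 - t) • y)

/-- `y` weakly dominates `xb` with respect to a (weak) relation `Rw`: `y` is a convex
combination of bundles each related to `xb` by `Rw`. -/
def WeakDomRel {m : ℕ} (Rw : (Fin m → ℝ) → (Fin m → ℝ) → Prop) (y xb : Fin m → ℝ) : Prop :=
  ∃ (L : ℕ) (lam : Fin L → ℝ) (z : Fin L → Fin m → ℝ),
    (∀ l, 0 ≤ lam l) ∧ (∑ l, lam l) = 1 ∧ (∀ l, 0 ≤ z l) ∧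
    y = ∑ l, lam l • z l ∧ (∀ l, Rw (z l) xb)

/-- `y` strictly dominates `xb`: weak domination, where moreover some bundle receiving
positive weight is related to `xb` by the strict relation `Rs`. -/
def StrictDomRel {m : ℕ} (Rw Rs : (Fin m → ℝ) → (Fin m → ℝ) → Prop) (y xb : Fin m → ℝ) :
    Prop :=
  ∃ (L : ℕ) (lam : Fin L → ℝ) (z : Fin L → Fin m → ℝ),
    (∀ l, 0 ≤ lam l) ∧ (∑ l, lam l) = 1 ∧ (∀ l, 0 ≤ z l) ∧
    y = ∑ l, lam l • z l ∧ (∀ l, Rw (z l) xb) ∧ (∃ l, 0 < lam l ∧ Rs (z l) xb)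

/-- The direct revealed preference augmented by a hypothetical bundle `xb`:
we add `xb ⪰^R x k` for every `k`, and `x k ⪰^R xb` whenever `p k ⬝ (xb - x k) ≤ 0`. -/
def RPa {m K : ℕ} (p x : Fin K → Fin m → ℝ) (xb : Fin m → ℝ) (a b : Fin m → ℝ) : Prop :=
  RP p x a b ∨
    (0 ≤ a ∧ 0 ≤ b ∧ a = xb ∧ ∃ k, b = x k) ∨
    (0 ≤ a ∧ 0 ≤ b ∧ b = xb ∧ ∃ k, a = x k ∧ dot (p k) (xb - x k) ≤ 0)

/-- The direct strict revealed preference augmented by a hypothetical bundle `xb`: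
we add `x k ≻^R xb` whenever `p k ⬝ (xb - x k) < 0`. -/
def SRPa {m K : ℕ} (p x : Fin K → Fin m → ℝ) (xb : Fin m → ℝ) (a b : Fin m → ℝ) : Prop :=
  (0 ≤ a ∧ 0 ≤ b ∧
    ((∃ a', StrLt a' a ∧ RPa p x xb a' b) ∨ ∃ k, x k ≤ a ∧ dot (p k) b < dot (p k) (x k))) ∨
  (0 ≤ a ∧ 0 ≤ b ∧ b = xb ∧ ∃ k, a = x k ∧ dot (p k) (xb - x k) < 0)

/-- Augmented indirect revealed preference. -/
def IRPa {m K : ℕ} (p x : Fin K → Fin m → ℝ) (xb : Fin m → ℝ) :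
    (Fin m → ℝ) → (Fin m → ℝ) → Prop :=
  Relation.TransGen (RPa p x xb)

/-- Augmented indirect strict revealed preference. -/
def SIRPa {m K : ℕ} (p x : Fin K → Fin m → ℝ) (xb : Fin m → ℝ) (a b : Fin m → ℝ) : Prop :=
  ∃ c d, Relation.ReflTransGen (RPa p x xb) a c ∧ SRPa p x xb c d ∧
    Relation.ReflTransGen (RPa p x xb) d b

-- Part 1: dot product lemmas and convexity helpers

section DotLemmas
variable {m : ℕ}

lemma dot_nonneg' {p z : Fin m → ℝ} (hp : 0 ≤ p) (hz : 0 ≤ z) : 0 ≤ dot p z :=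
  Finset.sum_nonneg fun j _ => mul_nonneg (hp j) (hz j)

lemma dot_mono {p a b : Fin m → ℝ} (hp : 0 ≤ p) (hab : a ≤ b) : dot p a ≤ dot p b :=
  Finset.sum_le_sum fun j _ => mul_le_mul_of_nonneg_left (hab j) (hp j)

lemma dot_sub (p a b : Fin m → ℝ) : dot p (a - b) = dot p a - dot p b := by
  simp [dot, mul_sub, Finset.sum_sub_distrib]

lemma dot_add (p a b : Fin m → ℝ) : dot p (a + b) = dot p a + dot p b := by
  simp [dot, mul_add, Finset.sum_add_distrib]

lemma dot_smul (p : Fin m → ℝ) (c : ℝ) (a : Fin m → ℝ) : dot p (c • a) = c * dot p a := by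
  simp only [dot, Pi.smul_apply, smul_eq_mul, Finset.mul_sum]
  exact Finset.sum_congr rfl fun j _ => by ring

lemma dot_strict {p a b : Fin m → ℝ} (hp : 0 ≤ p) (hpne : p ≠ 0) (h : StrLt a b) :
    dot p a < dot p b := by
  obtain ⟨j, hj⟩ := Function.ne_iff.mp hpne
  have hpj : 0 < p j := lt_of_le_of_ne (hp j) (Ne.symm hj)
  refine Finset.sum_lt_sum (fun i _ => mul_le_mul_of_nonneg_left (le_of_lt (h i)) (hp i)) ?_
  exact ⟨j, Finset.mem_univ j, mul_lt_mul_of_pos_left (h j) hpj⟩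

lemma dot_eq_zero_of_nonneg {p z : Fin m → ℝ} (hp : 0 ≤ p) (hz : 0 ≤ z) (hD : dot p (fun _ => 1) = 0) :
    dot p z = 0 := by
  have h0 : ∀ j, p j = 0 := by
    intro j
    have := (Finset.sum_eq_zero_iff_of_nonneg (fun i _ => by
      simpa using (hp i))).mp (by simpa [dot] using hD) j (Finset.mem_univ j)
    simpa using this
  simp [dot, h0]

end DotLemmas

section MixLemmas

lemma min_le_mix {a b t : ℝ} (h0 : 0 ≤ t) (h1 : t ≤ 1) : min a b ≤ t * a + (1 - t) * b := by
  rcases le_total a b with h | h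
  · have : min a b = a := min_eq_left h
    nlinarith
  · have : min a b = b := min_eq_right h
    nlinarith

lemma min_lt_mix {a b t : ℝ} (hne : a ≠ b) (h0 : 0 < t) (h1 : t < 1) :
    min a b < t * a + (1 - t) * b := by
  rcases lt_or_gt_of_ne hne with h | h
  · have : min a b = a := min_eq_left h.le
    nlinarith
  · have : min a b = b := min_eq_right h.le
    nlinarith

end MixLemmas

section CombLemmas
variable {m : ℕ} {ι : Type*} [DecidableEq ι]

lemma comb_nonneg (s : Finset ι) (lam : ι → ℝ) (z : ι → Fin m → ℝ)
    (hl : ∀ l ∈ s, 0 ≤ lam l) (hz : ∀ l ∈ s, 0 ≤ z l) :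
    (0 : Fin m → ℝ) ≤ ∑ l ∈ s, lam l • z l := by
  intro j
  simp only [Pi.zero_apply, Finset.sum_apply, Pi.smul_apply, smul_eq_mul]
  exact Finset.sum_nonneg fun l hl' => mul_nonneg (hl l hl') (hz l hl' j)

end CombLemmas
-- Part 2: finite convex combinations under (explicit) quasiconcavity

section QCLemmas
variable {m : ℕ} {u : (Fin m → ℝ) → ℝ} {ι : Type*} [DecidableEq ι]

lemma lemA (hq : QuasiconcaveOn' u) (v : ℝ) (s : Finset ι) :
    ∀ (lam : ι → ℝ) (z : ι → Fin m → ℝ),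
    (∀ l ∈ s, 0 ≤ lam l) → (∑ l ∈ s, lam l) = 1 → (∀ l ∈ s, 0 ≤ z l) →
    (∀ l ∈ s, v ≤ u (z l)) → v ≤ u (∑ l ∈ s, lam l • z l) := by
  induction s using Finset.induction_on with
  | empty =>
    intro lam z _ hsum _ _
    simp at hsum
  | @insert a s ha ih =>
    intro lam z hl hsum hz hv
    rw [Finset.sum_insert ha] at hsum ⊢
    set t : ℝ := ∑ l ∈ s, lam l with hts
    have ht0 : 0 ≤ t := Finset.sum_nonneg fun l hl' => hl l (Finset.mem_insert_of_mem hl')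
    have hla : 0 ≤ lam a := hl a (Finset.mem_insert_self a s)
    rcases eq_or_lt_of_le ht0 with ht | ht
    · -- all weights in s vanish
      have hz0 : ∀ l ∈ s, lam l = 0 := by
        intro l hl'
        exact (Finset.sum_eq_zero_iff_of_nonneg
          (fun l hl'' => hl l (Finset.mem_insert_of_mem hl''))).mp ht.symm l hl'
      have hsz : (∑ l ∈ s, lam l • z l) = 0 := Finset.sum_eq_zero fun l hl' => by
        simp [hz0 l hl']
      have hla1 : lam a = 1 := by rw [← ht] at hsum; simpa using hsum
      rw [hsz, hla1]
      simpa using hv a (Finset.mem_insert_self a s)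
    · -- positive total weight in s
      have htne : t ≠ 0 := ne_of_gt ht
      set lam' : ι → ℝ := fun l => lam l / t with hlam'
      set w : Fin m → ℝ := ∑ l ∈ s, lam' l • z l with hw
      have hw0 : (0:Fin m → ℝ) ≤ w :=
        comb_nonneg s lam' z
          (fun l hl' => div_nonneg (hl l (Finset.mem_insert_of_mem hl')) ht0)
          (fun l hl' => hz l (Finset.mem_insert_of_mem hl'))
      have hvw : v ≤ u w := by
        refine ih lam' z (fun l hl' => div_nonneg (hl l (Finset.mem_insert_of_mem hl')) ht0)
          ?_ (fun l hl' => hz l (Finset.mem_insert_of_mem hl'))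
          (fun l hl' => hv l (Finset.mem_insert_of_mem hl'))
        rw [hlam', ← Finset.sum_div, ← hts, div_self htne]
      have hsplit : (∑ l ∈ s, lam l • z l) = t • w := by
        rw [hw, Finset.smul_sum]
        refine Finset.sum_congr rfl fun l hl' => ?_
        rw [smul_smul, hlam', mul_div_cancel₀ _ htne]
      rw [hsplit]
      have hlat : (1:ℝ) - lam a = t := by linarith
      rcases eq_or_lt_of_le hla with hla0 | hla0
      · -- lam a = 0, so t = 1
        have ht1 : t = 1 := by linarith
        rw [← hla0, ht1]
        simpa using hvw
      · -- 0 < lam a < 1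
        have hlt1 : lam a < 1 := by linarith
        have := hq (z a) w (hz a (Finset.mem_insert_self a s)) hw0 (lam a) hla0 hlt1
        rw [hlat] at this
        refine le_trans (le_min (hv a (Finset.mem_insert_self a s)) hvw) this

lemma lemB (hq : ExplQuasiconcaveOn' u) (v : ℝ) (s : Finset ι) :
    ∀ (lam : ι → ℝ) (z : ι → Fin m → ℝ),
    (∀ l ∈ s, 0 ≤ lam l) → (∑ l ∈ s, lam l) = 1 → (∀ l ∈ s, 0 ≤ z l) →
    (∀ l ∈ s, v ≤ u (z l)) → (∃ l0 ∈ s, 0 < lam l0 ∧ v < u (z l0)) →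
    v < u (∑ l ∈ s, lam l • z l) := by
  induction s using Finset.induction_on with
  | empty =>
    intro lam z _ hsum _ _ _
    simp at hsum
  | @insert a s ha ih =>
    intro lam z hl hsum hz hv hstr
    rw [Finset.sum_insert ha] at hsum ⊢
    set t : ℝ := ∑ l ∈ s, lam l with hts
    have ht0 : 0 ≤ t := Finset.sum_nonneg fun l hl' => hl l (Finset.mem_insert_of_mem hl')
    have hla : 0 ≤ lam a := hl a (Finset.mem_insert_self a s)
    rcases eq_or_lt_of_le ht0 with ht | ht
    · -- all weights in s vanish, so l0 = a
      have hz0 : ∀ l ∈ s, lam l = 0 := by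
        intro l hl'
        exact (Finset.sum_eq_zero_iff_of_nonneg
          (fun l hl'' => hl l (Finset.mem_insert_of_mem hl''))).mp ht.symm l hl'
      have hsz : (∑ l ∈ s, lam l • z l) = 0 := Finset.sum_eq_zero fun l hl' => by
        simp [hz0 l hl']
      have hla1 : lam a = 1 := by rw [← ht] at hsum; simpa using hsum
      rw [hsz, hla1]
      obtain ⟨l0, hl0mem, hl0pos, hl0str⟩ := hstr
      rcases Finset.mem_insert.mp hl0mem with heq' | hl0s
      · rw [heq'] at hl0str; simpa using hl0str
      · exact absurd (hz0 l0 hl0s) (ne_of_gt hl0pos)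
    · have htne : t ≠ 0 := ne_of_gt ht
      set lam' : ι → ℝ := fun l => lam l / t with hlam'
      set w : Fin m → ℝ := ∑ l ∈ s, lam' l • z l with hw
      have hlam'nn : ∀ l ∈ s, 0 ≤ lam' l :=
        fun l hl' => div_nonneg (hl l (Finset.mem_insert_of_mem hl')) ht0
      have hlam'sum : (∑ l ∈ s, lam' l) = 1 := by
        rw [hlam', ← Finset.sum_div, ← hts, div_self htne]
      have hw0 : (0:Fin m → ℝ) ≤ w :=
        comb_nonneg s lam' z hlam'nn (fun l hl' => hz l (Finset.mem_insert_of_mem hl'))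
      have hvw : v ≤ u w :=
        lemA hq.1 v s lam' z hlam'nn hlam'sum
          (fun l hl' => hz l (Finset.mem_insert_of_mem hl'))
          (fun l hl' => hv l (Finset.mem_insert_of_mem hl'))
      have hsplit : (∑ l ∈ s, lam l • z l) = t • w := by
        rw [hw, Finset.smul_sum]
        refine Finset.sum_congr rfl fun l hl' => ?_
        rw [smul_smul, hlam', mul_div_cancel₀ _ htne]
      rw [hsplit]
      have hlat : (1:ℝ) - lam a = t := by linarith
      have hza0 : (0:Fin m → ℝ) ≤ z a := hz a (Finset.mem_insert_self a s)
      have hvza : v ≤ u (z a) := hv a (Finset.mem_insert_self a s)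
      obtain ⟨l0, hl0mem, hl0pos, hl0str⟩ := hstr
      rcases Finset.mem_insert.mp hl0mem with heq' | hl0s
      · -- strict element is a, so 0 < lam a and t < 1
        rw [heq'] at hl0pos hl0str
        have hlt1 : lam a < 1 := by linarith
        by_cases heq : u (z a) = u w
        · have := hq.1 (z a) w hza0 hw0 (lam a) hl0pos hlt1
          rw [hlat] at this
          calc v < u (z a) := hl0str
            _ = min (u (z a)) (u w) := by rw [heq, min_self]
            _ ≤ _ := this
        · have := hq.2 (z a) w hza0 hw0 heq (lam a) hl0pos hlt1
          rw [hlat] at this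
          exact lt_of_le_of_lt (le_min hvza hvw) this
      · -- strict element is in s
        have hvw' : v < u w :=
          ih lam' z hlam'nn hlam'sum
            (fun l hl' => hz l (Finset.mem_insert_of_mem hl'))
            (fun l hl' => hv l (Finset.mem_insert_of_mem hl'))
            ⟨l0, hl0s, div_pos hl0pos ht, hl0str⟩
        rcases eq_or_lt_of_le hla with hla0 | hla0
        · have ht1 : t = 1 := by linarith
          rw [← hla0, ht1]
          simpa using hvw'
        · have hlt1 : lam a < 1 := by linarith
          by_cases heq : u (z a) = u w
          · have := hq.1 (z a) w hza0 hw0 (lam a) hla0 hlt1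
            rw [hlat] at this
            calc v < u w := hvw'
              _ = min (u (z a)) (u w) := by rw [heq, min_self]
              _ ≤ _ := this
          · have := hq.2 (z a) w hza0 hw0 heq (lam a) hla0 hlt1
            rw [hlat] at this
            exact lt_of_le_of_lt (le_min hvza hvw'.le) this

end QCLemmas
-- Part 3: forward direction -- a rationalizing utility respects the (augmented) relations

section Forward
variable {m K : ℕ} {p x : Fin K → Fin m → ℝ} {xb : Fin m → ℝ} {u : (Fin m → ℝ) → ℝ}

lemma rat_contra (hu : Rationalizes p x u) (k : Fin K) {z : Fin m → ℝ} (hz : 0 ≤ z)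
    (h : dot (p k) z ≤ dot (p k) (x k)) : u z ≤ u (x k) := by
  by_contra h'
  push_neg at h'
  exact absurd (hu.2 k z hz h') (not_lt.mpr h)

lemma rat_strict (hu : Rationalizes p x u) (hp : ∀ k, 0 ≤ p k) (hx : ∀ k, 0 ≤ x k)
    (k : Fin K) {z : Fin m → ℝ} (hz : 0 ≤ z)
    (h : dot (p k) z < dot (p k) (x k)) : u z < u (x k) := by
  set D : ℝ := dot (p k) (fun _ => 1) with hD
  have hD0 : 0 ≤ D := dot_nonneg' (hp k) (fun j => by norm_num)
  rcases eq_or_lt_of_le hD0 with hDz | hDpos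
  · exfalso
    have h1 : dot (p k) z = 0 := dot_eq_zero_of_nonneg (hp k) hz hDz.symm
    have h2 : dot (p k) (x k) = 0 := dot_eq_zero_of_nonneg (hp k) (hx k) hDz.symm
    rw [h1, h2] at h; exact lt_irrefl _ h
  · set ε : ℝ := (dot (p k) (x k) - dot (p k) z) / (2 * D) with hε
    have hεpos : 0 < ε := div_pos (by linarith) (by linarith)
    set z' : Fin m → ℝ := fun j => z j + ε with hz'
    have hstr : StrLt z z' := fun j => by simp [hz', hεpos]
    have huz : u z < u z' := hu.1.2 z z' hz hstr
    by_contra hcon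
    push_neg at hcon
    have huz' : u (x k) < u z' := lt_of_le_of_lt hcon huz
    have hbig := hu.2 k z' (fun j => add_nonneg (hz j) hεpos.le) huz'
    have hdz' : dot (p k) z' = dot (p k) z + ε * D := by
      simp only [hz', dot, hD, mul_add, mul_one, Finset.sum_add_distrib, Finset.mul_sum]
      congr 1
      exact Finset.sum_congr rfl fun j _ => by ring
    have hεD : ε * D = (dot (p k) (x k) - dot (p k) z) / 2 := by
      rw [hε]; field_simp
    rw [hdz', hεD] at hbig
    linarith

lemma resp_RPa (hu : Rationalizes p x u) (hx : ∀ k, 0 ≤ x k) (hb : ∀ k, u (x k) ≤ u xb) :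
    ∀ a b, RPa p x xb a b → u b ≤ u a := by
  rintro a b (⟨ha, hbnn, hab⟩ | ⟨ha, hbnn, rfl, k, rfl⟩ | ⟨ha, hbnn, rfl, k, rfl, hk⟩)
  · rcases hab with rfl | ⟨k, hka, hkb⟩
    · exact le_refl _
    · exact le_trans (rat_contra hu k hbnn hkb) (hu.1.1 (x k) a (hx k) hka)
  · exact hb k
  · have h2 := dot_sub (p k) b (x k)
    exact rat_contra hu k hbnn (by linarith)

lemma RPa_nonneg {a b : Fin m → ℝ} (h : RPa p x xb a b) : 0 ≤ a ∧ 0 ≤ b := by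
  rcases h with ⟨ha, hb, _⟩ | ⟨ha, hb, _⟩ | ⟨ha, hb, _⟩ <;> exact ⟨ha, hb⟩

lemma resp_SRPa (hu : Rationalizes p x u) (hp : ∀ k, 0 ≤ p k) (hx : ∀ k, 0 ≤ x k)
    (hb : ∀ k, u (x k) ≤ u xb) :
    ∀ a b, SRPa p x xb a b → u b < u a := by
  rintro a b (⟨ha, hbnn, ⟨a', hstr, hR⟩ | ⟨k, hka, hkb⟩⟩ | ⟨ha, hbnn, rfl, k, rfl, hk⟩)
  · have h1 : u b ≤ u a' := resp_RPa hu hx hb a' b hR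
    have h2 : u a' < u a := hu.1.2 a' a (RPa_nonneg hR).1 hstr
    exact lt_of_le_of_lt h1 h2
  · exact lt_of_lt_of_le (rat_strict hu hp hx k hbnn hkb) (hu.1.1 (x k) a (hx k) hka)
  · have h2 := dot_sub (p k) b (x k)
    exact rat_strict hu hp hx k hbnn (by linarith)

lemma resp_IRPa_refl (hu : Rationalizes p x u) (hx : ∀ k, 0 ≤ x k) (hb : ∀ k, u (x k) ≤ u xb)
    {a b : Fin m → ℝ} (h : Relation.ReflTransGen (RPa p x xb) a b) : u b ≤ u a := by
  induction h with
  | refl => exact le_refl _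
  | tail h1 h2 ih => exact le_trans (resp_RPa hu hx hb _ _ h2) ih

lemma resp_IRPa (hu : Rationalizes p x u) (hx : ∀ k, 0 ≤ x k) (hb : ∀ k, u (x k) ≤ u xb)
    {a b : Fin m → ℝ} (h : IRPa p x xb a b) : u b ≤ u a :=
  resp_IRPa_refl hu hx hb h.to_reflTransGen

lemma resp_SIRPa (hu : Rationalizes p x u) (hp : ∀ k, 0 ≤ p k) (hx : ∀ k, 0 ≤ x k)
    (hb : ∀ k, u (x k) ≤ u xb) {a b : Fin m → ℝ} (h : SIRPa p x xb a b) : u b < u a := by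
  obtain ⟨c, d, h1, h2, h3⟩ := h
  calc u b ≤ u d := resp_IRPa_refl hu hx hb h3
    _ < u c := resp_SRPa hu hp hx hb c d h2
    _ ≤ u a := resp_IRPa_refl hu hx hb h1

end Forward
-- Part 4: Afriat's theorem for a general matrix

section AfriatMatrix
variable {ι : Type*} [DecidableEq ι]

lemma finset_bound (s : Finset ι) (f : ι → ℝ) : ∃ M, ∀ i ∈ s, f i ≤ M := by
  obtain ⟨M, hM⟩ := (s.image f).bddAbove
  exact ⟨M, fun i hi => hM (Finset.mem_coe.mpr (Finset.mem_image_of_mem f hi))⟩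

/-- one step of the "weakly revealed preferred" relation restricted to `S`. -/
def RSm (A : ι → ι → ℝ) (S : Finset ι) (j i : ι) : Prop := j ∈ S ∧ i ∈ S ∧ A j i ≤ 0

/-- cyclical consistency on `S`. -/
def CCm (A : ι → ι → ℝ) (S : Finset ι) : Prop :=
  ∀ i j, i ∈ S → j ∈ S → Relation.ReflTransGen (RSm A S) i j → ¬ A j i < 0

theorem afriat_matrix (A : ι → ι → ℝ) : ∀ S : Finset ι, CCm A S →
    ∃ U lam : ι → ℝ, (∀ j ∈ S, 0 < lam j) ∧
      ∀ i ∈ S, ∀ j ∈ S, U i ≤ U j + lam j * A j i := by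
  classical
  intro S
  induction S using Finset.strongInduction with
  | _ S ih =>
    intro hcc
    rcases S.eq_empty_or_nonempty with rfl | hne
    · exact ⟨0, fun _ => 1, fun j hj => absurd hj (Finset.notMem_empty j),
        fun i hi => absurd hi (Finset.notMem_empty i)⟩
    set ge' : ι → ι → Prop := fun k j => Relation.ReflTransGen (RSm A S) k j with hge'
    set dn : ι → Finset ι := fun k => S.filter (fun j => ge' k j) with hdn
    obtain ⟨k0, hk0S, hk0min⟩ := S.exists_min_image (fun k => (dn k).card) hne
    set B : Finset ι := S.filter (fun k => ∀ j ∈ S, ge' k j → ge' j k) with hB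
    have hBne : B.Nonempty := by
      refine ⟨k0, Finset.mem_filter.mpr ⟨hk0S, fun j hjS hgej => ?_⟩⟩
      by_contra hno
      have hsub : dn j ⊆ dn k0 := by
        intro l hl
        obtain ⟨hlS, hgejl⟩ := Finset.mem_filter.mp hl
        exact Finset.mem_filter.mpr ⟨hlS, hgej.trans hgejl⟩
      have hk0in : k0 ∈ dn k0 := Finset.mem_filter.mpr ⟨hk0S, Relation.ReflTransGen.refl⟩
      have hk0nin : k0 ∉ dn j := by
        intro hmem
        exact hno (Finset.mem_filter.mp hmem).2
      have hss : dn j ⊂ dn k0 :=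
        (Finset.ssubset_iff_of_subset hsub).mpr ⟨k0, hk0in, hk0nin⟩
      exact absurd (hk0min j hjS) (not_le.mpr (Finset.card_lt_card hss))
    set C : Finset ι := S \ B with hC
    have hBS : B ⊆ S := Finset.filter_subset _ _
    have hCS : C ⊆ S := Finset.sdiff_subset
    have hCss : C ⊂ S := Finset.sdiff_ssubset hBS hBne
    have hccC : CCm A C := by
      intro i j hi hj hchain hneg
      refine hcc i j (hCS hi) (hCS hj) ?_ hneg
      exact Relation.ReflTransGen.mono (fun a b hab => ⟨hCS hab.1, hCS hab.2.1, hab.2.2⟩) _ _ hchain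
    obtain ⟨U', lam', hlam', hineq'⟩ := ih C hCss hccC
    have fact1 : ∀ k ∈ B, ∀ j ∈ C, 0 < A k j := by
      intro k hk j hj
      by_contra hle
      push_neg at hle
      obtain ⟨hkS, hkB⟩ := Finset.mem_filter.mp hk
      obtain ⟨hjS, hjnB⟩ := Finset.mem_sdiff.mp hj
      have hkj : ge' k j := Relation.ReflTransGen.single ⟨hkS, hjS, hle⟩
      refine hjnB (Finset.mem_filter.mpr ⟨hjS, fun l hlS hjl => ?_⟩)
      have hkl : ge' k l := hkj.trans hjl
      exact (hkB l hlS hkl).trans hkj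
    have fact2 : ∀ k ∈ B, ∀ k' ∈ B, 0 ≤ A k k' := by
      intro k hk k' hk'
      by_contra hlt
      push_neg at hlt
      obtain ⟨hkS, hkB⟩ := Finset.mem_filter.mp hk
      obtain ⟨hk'S, _⟩ := Finset.mem_filter.mp hk'
      have hkk' : ge' k k' := Relation.ReflTransGen.single ⟨hkS, hk'S, hlt.le⟩
      exact hcc k' k hk'S hkS (hkB k' hk'S hkk') hlt
    -- numerical assembly
    obtain ⟨c1, hc1⟩ := finset_bound C (fun i => 1 - U' i)
    obtain ⟨c2, hc2⟩ := finset_bound (C ×ˢ B) (fun q => -(U' q.1 + lam' q.1 * A q.1 q.2))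
    set c : ℝ := max c1 c2 with hc
    set U'' : ι → ℝ := fun i => U' i + c with hU''
    have hU''1 : ∀ i ∈ C, 1 ≤ U'' i := by
      intro i hi
      have := hc1 i hi
      have := le_max_left c1 c2
      simp only [hU'']
      linarith
    have hU''b : ∀ j ∈ C, ∀ k ∈ B, 0 ≤ U'' j + lam' j * A j k := by
      intro j hj k hk
      have := hc2 (j, k) (Finset.mem_product.mpr ⟨hj, hk⟩)
      have := le_max_right c1 c2
      simp only [hU'']
      simp only at *
      linarith
    obtain ⟨Um0, hUm0⟩ := finset_bound C U''
    set Umax : ℝ := max Um0 1 with hUmaxdef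
    have hUmax : ∀ i ∈ C, U'' i ≤ Umax := fun i hi => le_trans (hUm0 i hi) (le_max_left _ _)
    have hUmax1 : (1:ℝ) ≤ Umax := le_max_right _ _
    obtain ⟨R0, hR0⟩ := finset_bound (C ×ˢ B) (fun q => Umax / A q.2 q.1)
    set lamB : ℝ := max R0 1 with hlamB
    have hlamB1 : (1:ℝ) ≤ lamB := le_max_right _ _
    refine ⟨fun i => if i ∈ B then 0 else U'' i, fun i => if i ∈ B then lamB else lam' i,
      ?_, ?_⟩
    · intro j hjS
      by_cases hjB : j ∈ B
      · simp only [if_pos hjB]; linarith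
      · simp only [if_neg hjB]
        exact hlam' j (Finset.mem_sdiff.mpr ⟨hjS, hjB⟩)
    · intro i hiS j hjS
      by_cases hiB : i ∈ B <;> by_cases hjB : j ∈ B
      · simp only [if_pos hiB, if_pos hjB]
        have h1 := fact2 j hjB i hiB
        nlinarith
      · simp only [if_pos hiB, if_neg hjB]
        have hjC : j ∈ C := Finset.mem_sdiff.mpr ⟨hjS, hjB⟩
        have := hU''b j hjC i hiB
        linarith
      · simp only [if_neg hiB, if_pos hjB]
        have hiC : i ∈ C := Finset.mem_sdiff.mpr ⟨hiS, hiB⟩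
        have hA := fact1 j hjB i hiC
        have h1 := hR0 (i, j) (Finset.mem_product.mpr ⟨hiC, hjB⟩)
        simp only at h1
        have h2 : Umax / A j i ≤ lamB := le_trans h1 (le_max_left _ _)
        have h3 : Umax ≤ lamB * A j i := (div_le_iff₀ hA).mp h2
        have h4 := hUmax i hiC
        linarith
      · simp only [if_neg hiB, if_neg hjB]
        have hiC : i ∈ C := Finset.mem_sdiff.mpr ⟨hiS, hiB⟩
        have hjC : j ∈ C := Finset.mem_sdiff.mpr ⟨hjS, hjB⟩
        have := hineq' i hiC j hjC
        simp only [hU'']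
        linarith

end AfriatMatrix
-- Part 5: reverse direction -- constructing the utility from GARP

section Reverse
variable {m K : ℕ}

/-- the bundle attached to an extended index. -/
def phi (x : Fin K → Fin m → ℝ) (xb : Fin m → ℝ) : Option (Fin K) → (Fin m → ℝ) :=
  fun o => o.elim xb x

/-- the extended Afriat matrix, with `xb` as an extra observation with zero price. -/
def Amat (p x : Fin K → Fin m → ℝ) (xb : Fin m → ℝ) :
    Option (Fin K) → Option (Fin K) → ℝ :=
  fun o1 o2 => o1.elim 0 (fun j => dot (p j) (phi x xb o2) - dot (p j) (x j))

variable {p x : Fin K → Fin m → ℝ} {xb : Fin m → ℝ}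

lemma phi_nonneg (hx : ∀ k, 0 ≤ x k) (hxb : 0 ≤ xb) : ∀ o, 0 ≤ phi x xb o := by
  rintro (_ | k)
  · exact hxb
  · exact hx k

lemma RPa_refl' {a : Fin m → ℝ} (ha : 0 ≤ a) : RPa p x xb a a :=
  Or.inl ⟨ha, ha, Or.inl rfl⟩

lemma RPa_of_RSm (hx : ∀ k, 0 ≤ x k) (hxb : 0 ≤ xb) (o1 o2 : Option (Fin K))
    (h : Amat p x xb o1 o2 ≤ 0) : RPa p x xb (phi x xb o1) (phi x xb o2) := by
  match o1 with
  | none =>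
    match o2 with
    | none => exact RPa_refl' hxb
    | some k => exact Or.inr (Or.inl ⟨hxb, hx k, rfl, k, rfl⟩)
  | some j =>
    have h' : dot (p j) (phi x xb o2) ≤ dot (p j) (x j) := by
      simpa [Amat] using h
    match o2 with
    | some i => exact Or.inl ⟨hx j, hx i, Or.inr ⟨j, le_refl _, h'⟩⟩
    | none =>
      refine Or.inr (Or.inr ⟨hx j, hxb, rfl, j, rfl, ?_⟩)
      rw [dot_sub]
      simp only [phi, Option.elim] at h'
      linarith

lemma SRPa_of_neg (hx : ∀ k, 0 ≤ x k) (hxb : 0 ≤ xb) (o1 o2 : Option (Fin K))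
    (h : Amat p x xb o1 o2 < 0) : SRPa p x xb (phi x xb o1) (phi x xb o2) := by
  match o1 with
  | none => simp [Amat] at h
  | some j =>
    have h' : dot (p j) (phi x xb o2) < dot (p j) (x j) := by
      simpa [Amat] using h
    match o2 with
    | some i => exact Or.inl ⟨hx j, hx i, Or.inr ⟨j, le_refl _, h'⟩⟩
    | none =>
      refine Or.inr ⟨hx j, hxb, rfl, j, rfl, ?_⟩
      rw [dot_sub]
      simp only [phi, Option.elim] at h'
      linarith

lemma cc_univ (hx : ∀ k, 0 ≤ x k) (hxb : 0 ≤ xb)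
    (hg : ¬∃ a b : Fin m → ℝ, IRPa p x xb a b ∧ SIRPa p x xb b a) :
    CCm (Amat p x xb) Finset.univ := by
  intro i j _ _ hchain hneg
  have hchain' : Relation.ReflTransGen (RPa p x xb) (phi x xb i) (phi x xb j) :=
    Relation.ReflTransGen.lift (phi x xb)
      (fun a b hab => RPa_of_RSm hx hxb a b hab.2.2) _ _ hchain
  have hIR : IRPa p x xb (phi x xb i) (phi x xb j) := by
    rcases Relation.reflTransGen_iff_eq_or_transGen.mp hchain' with heq | htg
    · rw [heq]
      exact Relation.TransGen.single (RPa_refl' (phi_nonneg hx hxb i))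
    · exact htg
  have hS : SRPa p x xb (phi x xb j) (phi x xb i) := SRPa_of_neg hx hxb j i hneg
  exact hg ⟨phi x xb i, phi x xb j, hIR,
    ⟨phi x xb j, phi x xb i, Relation.ReflTransGen.refl, hS, Relation.ReflTransGen.refl⟩⟩

lemma p_ne_zero (hx : ∀ k, 0 ≤ x k)
    (hg : ¬∃ a b : Fin m → ℝ, IRPa p x xb a b ∧ SIRPa p x xb b a) :
    ∀ k, p k ≠ 0 := by
  intro k hpk
  set a : Fin m → ℝ := x k with haa
  set b : Fin m → ℝ := fun j => x k j + 1 with hbb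
  set a' : Fin m → ℝ := fun j => x k j + 1/2 with haa'
  have hbnn : (0:Fin m → ℝ) ≤ b := fun j => by
    have := hx k j; simp only [hbb]; linarith
  have ha'nn : (0:Fin m → ℝ) ≤ a' := fun j => by
    have := hx k j; simp only [haa']; linarith
  have hdot0 : ∀ z : Fin m → ℝ, dot (p k) z = 0 := fun z => by simp [dot, hpk]
  have hab : RPa p x xb a b :=
    Or.inl ⟨hx k, hbnn, Or.inr ⟨k, le_refl _, by simp [hdot0]⟩⟩
  have hIR : IRPa p x xb a b := Relation.TransGen.single hab
  have hS : SIRPa p x xb b a := by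
    refine ⟨b, a, Relation.ReflTransGen.refl, ?_, Relation.ReflTransGen.refl⟩
    refine Or.inl ⟨hbnn, hx k, Or.inl ⟨a', fun j => by simp only [haa', hbb]; linarith, ?_⟩⟩
    exact Or.inl ⟨ha'nn, hx k, Or.inr ⟨k, fun j => by simp only [haa']; linarith,
      by simp [hdot0]⟩⟩
  exact hg ⟨a, b, hIR, hS⟩

lemma reverse_dir (hm : 0 < m) (hp : ∀ k, 0 ≤ p k) (hx : ∀ k, 0 ≤ x k) (hxb : 0 ≤ xb)
    (hg : ¬∃ a b : Fin m → ℝ, IRPa p x xb a b ∧ SIRPa p x xb b a) :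
    ∃ u : (Fin m → ℝ) → ℝ, ExplQuasiconcaveOn' u ∧ Rationalizes p x u ∧
      ∀ k, u (x k) ≤ u xb := by
  have hmne : (Finset.univ : Finset (Fin m)).Nonempty := ⟨⟨0, hm⟩, Finset.mem_univ _⟩
  rcases Nat.eq_zero_or_pos K with hK | hK
  · -- no observations: use the sum of coordinates
    subst hK
    refine ⟨fun z => ∑ j, z j, ⟨?_, ?_⟩, ⟨⟨?_, ?_⟩, ?_⟩, ?_⟩
    · intro a b _ _ t ht0 ht1
      have key : (∑ j, (t • a + (1-t) • b) j) = t * (∑ j, a j) + (1-t) * (∑ j, b j) := by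
        simp only [Pi.add_apply, Pi.smul_apply, smul_eq_mul, Finset.sum_add_distrib,
          Finset.mul_sum]
      calc min (∑ j, a j) (∑ j, b j) ≤ t * (∑ j, a j) + (1-t) * (∑ j, b j) :=
            min_le_mix ht0.le ht1.le
        _ = ∑ j, (t • a + (1-t) • b) j := key.symm
    · intro a b _ _ hne t ht0 ht1
      have key : (∑ j, (t • a + (1-t) • b) j) = t * (∑ j, a j) + (1-t) * (∑ j, b j) := by
        simp only [Pi.add_apply, Pi.smul_apply, smul_eq_mul, Finset.sum_add_distrib,
          Finset.mul_sum]
      calc min (∑ j, a j) (∑ j, b j) < t * (∑ j, a j) + (1-t) * (∑ j, b j) :=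
            min_lt_mix hne ht0 ht1
        _ = ∑ j, (t • a + (1-t) • b) j := key.symm
    · exact fun a b _ hab => Finset.sum_le_sum fun j _ => hab j
    · exact fun a b _ hab => Finset.sum_lt_sum_of_nonempty hmne fun j _ => hab j
    · exact fun k => Fin.elim0 k
    · exact fun k => Fin.elim0 k
  · -- the interesting case
    have hKne : Nonempty (Fin K) := ⟨⟨0, hK⟩⟩
    obtain ⟨U, lam, hlampos, hineq⟩ := afriat_matrix (Amat p x xb) Finset.univ
      (cc_univ hx hxb hg)
    have hlam : ∀ o, 0 < lam o := fun o => hlampos o (Finset.mem_univ _)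
    set g : Fin K → (Fin m → ℝ) → ℝ :=
      fun k z => U (some k) + lam (some k) * (dot (p k) z - dot (p k) (x k)) with hg'
    have hKune : (Finset.univ : Finset (Fin K)).Nonempty := ⟨⟨0, hK⟩, Finset.mem_univ _⟩
    set u : (Fin m → ℝ) → ℝ := fun z => Finset.univ.inf' hKune (fun k => g k z) with hu
    have hule : ∀ z k, u z ≤ g k z := fun z k => Finset.inf'_le _ (Finset.mem_univ k)
    have hueq : ∀ z, ∃ k, u z = g k z := fun z => by
      obtain ⟨k, _, hk⟩ := Finset.exists_mem_eq_inf' hKune (fun k => g k z)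
      exact ⟨k, hk⟩
    have hAineq : ∀ i j : Fin K,
        U (some i) ≤ U (some j) + lam (some j) * (dot (p j) (x i) - dot (p j) (x j)) := by
      intro i j
      simpa [Amat, phi] using hineq (some i) (Finset.mem_univ _) (some j) (Finset.mem_univ _)
    have hbar1 : ∀ i : Fin K, U (some i) ≤ U none := by
      intro i
      simpa [Amat] using hineq (some i) (Finset.mem_univ _) none (Finset.mem_univ _)
    have hbar2 : ∀ j : Fin K, U none ≤ g j xb := by
      intro j
      simpa [Amat, phi, hg'] using hineq none (Finset.mem_univ _) (some j) (Finset.mem_univ _)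
    have huval : ∀ k, u (x k) = U (some k) := by
      intro k
      refine le_antisymm ?_ (Finset.le_inf' _ _ fun j _ => hAineq k j)
      have := hule (x k) k
      simpa [hg'] using this
    have hpne : ∀ k, p k ≠ 0 := p_ne_zero hx hg
    have hmono : ∀ a b : Fin m → ℝ, a ≤ b → u a ≤ u b := by
      intro a b hab
      refine Finset.le_inf' _ _ fun j _ => le_trans (hule a j) ?_
      simp only [hg']
      have h1 : dot (p j) a ≤ dot (p j) b := dot_mono (hp j) hab
      nlinarith [hlam (some j)]
    have hstrict : ∀ a b : Fin m → ℝ, StrLt a b → u a < u b := by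
      intro a b hab
      obtain ⟨k, hk⟩ := hueq b
      have h1 : u a ≤ g k a := hule a k
      have h2 : g k a < g k b := by
        have h3 := dot_strict (hp k) (hpne k) hab
        simp only [hg']
        nlinarith [hlam (some k)]
      rw [hk]
      exact lt_of_le_of_lt h1 h2
    have haffine : ∀ (k : Fin K) (a b : Fin m → ℝ) (t : ℝ),
        g k (t • a + (1-t) • b) = t * g k a + (1-t) * g k b := by
      intro k a b t
      simp only [hg', dot_add, dot_smul]
      ring
    have hconc : ∀ (a b : Fin m → ℝ) (t : ℝ), 0 ≤ t → t ≤ 1 →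
        t * u a + (1-t) * u b ≤ u (t • a + (1-t) • b) := by
      intro a b t ht0 ht1
      refine Finset.le_inf' _ _ fun j _ => ?_
      have h1 : t * u a ≤ t * g j a := mul_le_mul_of_nonneg_left (hule a j) ht0
      have h2 : (1-t) * u b ≤ (1-t) * g j b :=
        mul_le_mul_of_nonneg_left (hule b j) (by linarith)
      calc t * u a + (1-t) * u b ≤ t * g j a + (1-t) * g j b := by linarith
        _ = g j (t • a + (1-t) • b) := (haffine j a b t).symm
    refine ⟨u, ⟨?_, ?_⟩, ⟨⟨fun a b _ hab => hmono a b hab, ?_⟩, ?_⟩, ?_⟩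
    · intro a b _ _ t ht0 ht1
      exact le_trans (min_le_mix ht0.le ht1.le) (hconc a b t ht0.le ht1.le)
    · intro a b _ _ hne t ht0 ht1
      exact lt_of_lt_of_le (min_lt_mix hne ht0 ht1) (hconc a b t ht0.le ht1.le)
    · exact fun a b _ hab => hstrict a b hab
    · intro k z hz hlt
      by_contra hc
      push_neg at hc
      have h1 : u z ≤ g k z := hule z k
      have h2 : g k z ≤ U (some k) := by
        simp only [hg']
        nlinarith [hlam (some k)]
      rw [huval k] at hlt
      linarith
    · intro k
      rw [huval k]
      refine le_trans (hbar1 k) (Finset.le_inf' _ _ fun j _ => hbar2 j)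

end Reverse
/-- There is an increasing, explicitly quasiconcave rationalizing utility
ranking the hypothetical bundle `xb` weakly above every observed bundle if and only if the
augmented relations satisfy GARP, and no bundle `y ≤ xb` strictly dominates `xb`. -/
theorem stmt3 {m K : ℕ} (hm : 0 < m)
    (p x : Fin K → Fin m → ℝ) (hp : ∀ k, 0 ≤ p k) (hx : ∀ k, 0 ≤ x k)
    (xb : Fin m → ℝ) (hxb : 0 ≤ xb) :
    (∃ u : (Fin m → ℝ) → ℝ, ExplQuasiconcaveOn' u ∧ Rationalizes p x u ∧
        ∀ k, u (x k) ≤ u xb)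
    ↔ ((¬ ∃ a b : Fin m → ℝ, IRPa p x xb a b ∧ SIRPa p x xb b a) ∧
        ¬ ∃ y : Fin m → ℝ, y ≤ xb ∧ StrictDomRel (IRPa p x xb) (SIRPa p x xb) y xb) := by
  constructor
  · rintro ⟨u, hq, hr, hb⟩
    constructor
    · rintro ⟨a, b, h1, h2⟩
      exact absurd (resp_IRPa hr hx hb h1) (not_le.mpr (resp_SIRPa hr hp hx hb h2))
    · rintro ⟨y, hy, L, lamv, z, hnn, hsum, hznn, hyeq, hweak, l0, hl0pos, hl0str⟩
      have h1 : ∀ l, u xb ≤ u (z l) := fun l => resp_IRPa hr hx hb (hweak l)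
      have h2 : u xb < u (z l0) := resp_SIRPa hr hp hx hb hl0str
      have h3 := lemB hq (u xb) Finset.univ lamv z (fun l _ => hnn l) hsum
        (fun l _ => hznn l) (fun l _ => h1 l) ⟨l0, Finset.mem_univ _, hl0pos, h2⟩
      rw [← hyeq] at h3
      have h0y : (0:Fin m → ℝ) ≤ y := by
        rw [hyeq]
        exact comb_nonneg Finset.univ lamv z (fun l _ => hnn l) (fun l _ => hznn l)
      have h4 : u y ≤ u xb := hr.1.1 y xb h0y hy
      linarith
  · rintro ⟨hg, _⟩
    exact reverse_dir hm hp hx hxb hg
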